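/- If Y, Y' are i.i.d. non-negative random variables with E[Y] > 0, ess inf Y = 0, and p is strictly increasing with all relevant expectations finite, then E[p(Y')] < E[∫_Y^{Y+Y'} p(t) dt]/E[Y'], i.e., the zero-wait optimality condition fails. -/

import Mathlib

open MeasureTheory ProbabilityTheory

lemma const_mul_le_intervalIntegral (p : ℝ → ℝ) (hp : StrictMono p) {a b : ℝ} (hab : a ≤ b) :
    (b - a) * p a ≤ ∫ t in a..b, p t := by
  have h := intervalIntegral.integral_mono_on (μ := MeasureTheory.volume)
    (f := fun _ => p a) (g := p) hab
    (intervalIntegrable_const) (hp.monotone.intervalIntegrable)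
    (fun t ht => hp.monotone ht.1)
  simpa [smul_eq_mul, mul_comm] using h

lemma const_mul_lt_intervalIntegral (p : ℝ → ℝ) (hp : StrictMono p) {a b : ℝ} (hab : a < b) :
    (b - a) * p a < ∫ t in a..b, p t := by
  set m := (a + b) / 2 with hm
  have ham : a < m := by simp [hm]; linarith
  have hmb : m < b := by simp [hm]; linarith
  have hsplit : (∫ t in a..m, p t) + ∫ t in m..b, p t = ∫ t in a..b, p t :=
    intervalIntegral.integral_add_adjacent_intervals
      (hp.monotone.intervalIntegrable) (hp.monotone.intervalIntegrable)
  have h1 : (m - a) * p a ≤ ∫ t in a..m, p t :=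
    const_mul_le_intervalIntegral p hp ham.le
  have h2 : (b - m) * p m ≤ ∫ t in m..b, p t :=
    const_mul_le_intervalIntegral p hp hmb.le
  have h3 : (b - m) * p a < (b - m) * p m :=
    mul_lt_mul_of_pos_left (hp ham) (by linarith)
  nlinarith [hsplit, h1, h2, h3]

/-- If `Y, Y'` are i.i.d. non-negative random variables with `E[Y] > 0`
and `ess inf Y = 0` (i.e. `Pr[Y ≤ ε] > 0` for every `ε > 0`), and `p` is strictly
increasing with the relevant expectations finite, then
`E[Y']·E[p(Y')] < E[∫_Y^{Y+Y'} p(t) dt]`; i.e. the zero-wait optimality condition fails. -/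
theorem zero_wait_suboptimal_essinf_zero
    {Ω : Type*} [MeasurableSpace Ω] {μ : Measure Ω} [IsProbabilityMeasure μ]
    (Y Y' : Ω → ℝ) (hY : Measurable Y) (hY' : Measurable Y')
    (hnn : ∀ ω, 0 ≤ Y ω) (hnn' : ∀ ω, 0 ≤ Y' ω)
    (hiid : IdentDistrib Y Y' μ μ) (hind : IndepFun Y Y' μ)
    (hEY : 0 < ∫ ω, Y ω ∂μ)
    (hessinf : ∀ ε : ℝ, 0 < ε → 0 < μ {ω | Y ω ≤ ε})
    (p : ℝ → ℝ) (hp : StrictMono p) (hpm : Measurable p)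
    (hint₁ : Integrable (fun ω => Y ω) μ)
    (hint₂ : Integrable (fun ω => p (Y' ω)) μ)
    (hint₃ : Integrable (fun ω => ∫ t in (Y ω)..(Y ω + Y' ω), p t) μ) :
    (∫ ω, Y' ω ∂μ) * (∫ ω, p (Y' ω) ∂μ) <
      ∫ ω, (∫ t in (Y ω)..(Y ω + Y' ω), p t) ∂μ := by
  -- identdistrib facts
  have hidpY : IdentDistrib (fun ω => p (Y ω)) (fun ω => p (Y' ω)) μ μ :=
    hiid.comp hpm
  have hintY' : Integrable (fun ω => Y' ω) μ := hiid.integrable_iff.mp hint₁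
  have hintpY : Integrable (fun ω => p (Y ω)) μ := hidpY.integrable_iff.mpr hint₂
  have hEYeq : (∫ ω, Y ω ∂μ) = ∫ ω, Y' ω ∂μ := hiid.integral_eq
  have hEpYeq : (∫ ω, p (Y ω) ∂μ) = ∫ ω, p (Y' ω) ∂μ := hidpY.integral_eq
  -- independence: E[p(Y) * Y'] = E[p(Y)] * E[Y']
  have hindc : IndepFun (fun ω => p (Y ω)) Y' μ :=
    hind.comp hpm measurable_id
  have hmul : ∫ ω, p (Y ω) * Y' ω ∂μ = (∫ ω, p (Y ω) ∂μ) * ∫ ω, Y' ω ∂μ :=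
    hindc.integral_fun_mul_eq_mul_integral hintpY.aestronglyMeasurable hintY'.aestronglyMeasurable
  have hintmul : Integrable (fun ω => p (Y ω) * Y' ω) μ :=
    hindc.integrable_mul hintpY hintY'
  -- pointwise bound
  have hpt : ∀ ω, p (Y ω) * Y' ω ≤ ∫ t in (Y ω)..(Y ω + Y' ω), p t := by
    intro ω
    have := const_mul_le_intervalIntegral p hp
      (show Y ω ≤ Y ω + Y' ω by linarith [hnn' ω])
    simpa [mul_comm] using this.trans_eq' (by ring_nf)
  -- g := integral - product is nonneg, integrable, positive on {Y' > 0}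
  set g : Ω → ℝ := fun ω => (∫ t in (Y ω)..(Y ω + Y' ω), p t) - p (Y ω) * Y' ω with hg
  have hgnn : 0 ≤ g := fun ω => sub_nonneg.mpr (hpt ω)
  have hgint : Integrable g μ := hint₃.sub hintmul
  have hY'pos : 0 < μ {ω | 0 < Y' ω} := by
    by_contra h
    push_neg at h
    have h0 : μ {ω | Y' ω ≠ 0} = 0 := by
      have : {ω | Y' ω ≠ 0} ⊆ {ω | 0 < Y' ω} := fun ω hω =>
        lt_of_le_of_ne (hnn' ω) (Ne.symm hω)
      exact le_antisymm ((measure_mono this).trans h) (zero_le)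
    have : (fun ω => Y' ω) =ᵐ[μ] 0 := by
      filter_upwards [measure_eq_zero_iff_ae_notMem.mp h0] with ω hω
      simpa using hω
    have hz : ∫ ω, Y' ω ∂μ = 0 := by rw [integral_congr_ae this]; simp
    rw [hEYeq, hz] at hEY
    exact lt_irrefl _ hEY
  have hsupp : {ω | 0 < Y' ω} ⊆ Function.support g := by
    intro ω hω
    simp only [Set.mem_setOf_eq] at hω
    have hlt : p (Y ω) * Y' ω < ∫ t in (Y ω)..(Y ω + Y' ω), p t := by
      have := const_mul_lt_intervalIntegral p hp
        (show Y ω < Y ω + Y' ω by linarith [hω])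
      calc p (Y ω) * Y' ω = (Y ω + Y' ω - Y ω) * p (Y ω) := by ring
        _ < _ := this
    exact ne_of_gt (sub_pos.mpr hlt)
  have hgpos : 0 < ∫ ω, g ω ∂μ := by
    rw [integral_pos_iff_support_of_nonneg hgnn hgint]
    exact lt_of_lt_of_le hY'pos (measure_mono hsupp)
  have : ∫ ω, g ω ∂μ = (∫ ω, (∫ t in (Y ω)..(Y ω + Y' ω), p t) ∂μ) -
      ∫ ω, p (Y ω) * Y' ω ∂μ := integral_sub hint₃ hintmul
  rw [this] at hgpos
  rw [hmul, hEpYeq] at hgpos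
  linarith
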